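/- Let (γ,w) be an (n,mn)-parking function with dinv(γ,w) = 0. Then area(γ) = m·C(n,2) - n·des(w) + maj(w), where des(w) and maj(w) are the number of descents and the major index of the permutation w. -/

import Mathlib

open scoped Classical

inductive Step : Type
  | N | E | D
deriving DecidableEq, Repr

instance : Fintype Step :=
  ⟨{Step.N, Step.E, Step.D}, by intro x; cases x <;> simp⟩

open Step

/-- number of occurrences of the letter `s` in the word `w` -/
def cnt (s : Step) (w : List Step) : ℕ := w.count s

/-- Schröder (or Dyck, if no `D`s) path in an `n × n` grid: every prefix has at
least as many `N`s as `E`s, and the totals agree. -/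
def IsSchroeder (w : List Step) : Prop :=
  (∀ p : List Step, p <+: w → cnt E p ≤ cnt N p) ∧ cnt N w = cnt E w

/-- words that are concatenations of blocks `NE` and `D` -/
inductive IsNED : List Step → Prop
  | nil : IsNED []
  | ne {w} : IsNED w → IsNED (N :: E :: w)
  | d {w} : IsNED w → IsNED (D :: w)

/-- area of a Schröder path: the number of lower triangles between the path and the
main diagonal, computed as the sum over `N` and `D` steps of the height
`#N - #E` of the starting point of the step above the diagonal. -/
def areaAux : ℕ → List Step → ℕ
  | _, [] => 0
  | h, N :: w => h + areaAux (h+1) w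
  | h, D :: w => h + areaAux h w
  | h, E :: w => areaAux (h-1) w

def area (w : List Step) : ℕ := areaAux 0 w

/-- area of an `N/E` lattice path in a rectangular grid: the number of boxes under
the path, i.e. the sum over `E` steps of the number of `N` steps before it. -/
def areaNEAux : ℕ → List Step → ℕ
  | _, [] => 0
  | h, N :: w => areaNEAux (h+1) w
  | h, E :: w => h + areaNEAux h w
  | h, D :: w => areaNEAux h w

def areaNE (w : List Step) : ℕ := areaNEAux 0 w

/-- number of `N`s occurring before the `(j+1)`-st `E` (`j` is 0-indexed);
this is the height of the path above the horizontal interval `[j, j+1]`. -/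
def nBefore : List Step → ℕ → ℕ
  | [], _ => 0
  | N :: w, j => 1 + nBefore w j
  | E :: w, j => if j = 0 then 0 else nBefore w (j-1)
  | D :: w, j => nBefore w j

/-- number of `E`s occurring before the `(i+1)`-st `N` (`i` is 0-indexed). -/
def eBefore : List Step → ℕ → ℕ
  | [], _ => 0
  | E :: w, i => 1 + eBefore w i
  | N :: w, i => if i = 0 then 0 else eBefore w (i-1)
  | D :: w, i => eBefore w i

/-- number of `D`s occurring after the `e`-th `E` (`e` is 1-indexed). -/
def dAfterE : List Step → ℕ → ℕ
  | [], _ => 0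
  | E :: w, e => if e ≤ 1 then cnt D w else dAfterE w (e-1)
  | D :: w, e => dAfterE w e
  | N :: w, e => dAfterE w e

/-- Combined computation of `bounce(Γ(γ)) + numph(γ)` along the bounce path of
`Γ(γ)`.  Here `g` is the Schröder path, `w = Γ(g)` is the underlying Dyck path,
`nn` its size; the bounce path has corners (peaks) at the positions
`j₀ = 0, jₖ₊₁ = nBefore w jₖ`; each intermediate return `jₖ₊₁ < nn` contributes
`nn - jₖ₊₁` to the bounce of `Γ(g)`, and the peak with corner at `jₖ` is the start
of the `(jₖ+1)`-st east step, contributing to numph the number of diagonal steps of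
`g` above it, i.e. after that east step. -/
def bounceAux (g w : List Step) (nn : ℕ) : ℕ → ℕ → ℕ
  | 0, _ => 0
  | fuel+1, j =>
      dAfterE g (j+1) +
        (if nn ≤ nBefore w j ∨ nBefore w j ≤ j then 0
         else (nn - nBefore w j) + bounceAux g w nn fuel (nBefore w j))

/-- the bounce statistic of a Schröder path: `bounce(Γ(γ)) + numph(γ)` -/
def bounce (g : List Step) : ℕ :=
  let w := g.filter (fun s => s ≠ D)
  let nn := cnt E w
  if nn = 0 then 0 else bounceAux g w nn g.length 0

/-- the (signed) area coordinate `a_i = m·i - (#E before the (i+1)-st N)` of line `i`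
(0-indexed) for a path in an `n × mn` grid. -/
def aLine (m : ℕ) (g : List Step) (i : ℕ) : ℤ := (m : ℤ) * i - eBefore g i

/-- an `(n, mn)`-Dyck path: `n` north steps, `mn` east steps, no diagonal steps,
staying weakly above the main diagonal. -/
def IsParkingPath (n m : ℕ) (g : List Step) : Prop :=
  (∀ s ∈ g, s ≠ D) ∧ cnt N g = n ∧ cnt E g = m * n ∧
    ∀ p : List Step, p <+: g → cnt E p ≤ m * cnt N p

/-- an `(n, mn)`-parking function: an `(n,mn)`-Dyck path labelled by a permutation
`w` of `{0, …, n-1}` whose labels increase within each column. -/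
def IsParking (n m : ℕ) (g : List Step) (w : Fin n → Fin n) : Prop :=
  IsParkingPath n m g ∧ Function.Bijective w ∧
    ∀ i j : Fin n, (j : ℕ) = (i : ℕ) + 1 → eBefore g (i : ℕ) = eBefore g (j : ℕ) → w i < w j

/-- the diagonal inversion statistic of an `(n, mn)`-parking function -/
def dinv (n m : ℕ) (g : List Step) (w : Fin n → Fin n) : ℤ :=
  ∑ i : Fin n, ∑ j : Fin n,
    if (i : ℕ) < (j : ℕ) then
      (if w i < w j then max 0 ((m : ℤ) - |aLine m g (i : ℕ) - aLine m g (j : ℕ)|) else 0) +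
        (if w j < w i then max 0 ((m : ℤ) - |aLine m g (j : ℕ) - aLine m g (i : ℕ) + 1|) else 0)
    else 0

/-- the number of descents of the word `w` -/
def desNum (n : ℕ) (w : Fin n → Fin n) : ℕ :=
  ((Finset.range (n-1)).filter fun i =>
    ∃ hj : i + 1 < n, w ⟨i+1, hj⟩ < w ⟨i, Nat.lt_of_succ_lt hj⟩).card

/-- the major index of the word `w` (with positions 1-indexed as usual) -/
def majStat (n : ℕ) (w : Fin n → Fin n) : ℕ :=
  ∑ i ∈ (Finset.range (n-1)).filter (fun i =>
    ∃ hj : i + 1 < n, w ⟨i+1, hj⟩ < w ⟨i, Nat.lt_of_succ_lt hj⟩), (i+1)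

/-- the reading word of a labelled path in an `n × mn` grid: labels are read along
diagonals parallel to the main diagonal, starting with the farthest diagonal,
each diagonal being read from top-right to bottom-left. -/
def readWord (n m : ℕ) (g : List Step) (lab : ℕ → ℕ) : List ℕ :=
  ((List.range (m * n + 1)).map fun k =>
    (((List.range n).reverse.filter fun i => aLine m g i = (m * n : ℤ) - k).map lab)).flatten

/-- the labelling function `ℕ → ℕ` associated to a permutation of `Fin n` -/
def labOf {n : ℕ} (w : Fin n → Fin n) : ℕ → ℕ :=
  fun i => if h : i < n then (w ⟨i, h⟩ : ℕ) else 0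

/-- one step of the algorithm `φ`, on the reversed word: find the rightmost
(i.e. first in the reversed word) east step not followed by an east step,
and swap it with the letter following it. -/
def phiRevAux : List Step → List Step
  | a :: E :: t => if a ≠ E then E :: a :: t else a :: phiRevAux (E :: t)
  | a :: t => a :: phiRevAux t
  | [] => []

/-- one step of the algorithm `φ` -/
def phiStep (w : List Step) : List Step := (phiRevAux w.reverse).reverse

/-- the sequence `φ(γ) = (γ₀, γ₁, …, γ_{bounce γ})` produced by the algorithm -/
def phiSeq (g : List Step) : List (List Step) :=
  (List.range (bounce g + 1)).map fun i => phiStep^[i] g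

/-- the union of all sequences `φ(γ)` over area-0 Schröder paths with `n` blocks -/
def phiUniv (n : ℕ) : Set (List Step) :=
  {p | ∃ g, IsNED g ∧ cnt N g + cnt D g = n ∧ p ∈ phiSeq g}

/-- the map replacing each block `NE` by `N` and each `D` by `E` -/
def theta : List Step → List Step
  | N :: E :: w => N :: theta w
  | D :: w => E :: theta w
  | _ :: w => theta w
  | [] => []

/-- the cells of the hook-shaped Young diagram `(d, 1^{n-d})` (row 0 is the arm). -/
def hookCells (n d : ℕ) : Finset (ℕ × ℕ) :=
  ((Finset.range d).image fun c => ((0 : ℕ), c)) ∪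
    ((Finset.range (n - d + 1)).image fun r => (r, (0 : ℕ)))

/-- a standard Young tableau of hook shape `(d, 1^{n-d})`: `pos i` is the cell
`(row, column)` containing the entry `i+1`; entries increase along rows and columns. -/
structure HookSYT (n d : ℕ) where
  pos : Fin n → ℕ × ℕ
  mem : ∀ i, pos i ∈ hookCells n d
  inj : Function.Injective pos
  rowInc : ∀ i j : Fin n, (pos i).1 = (pos j).1 → (pos i).2 < (pos j).2 → i < j
  colInc : ∀ i j : Fin n, (pos i).2 = (pos j).2 → (pos i).1 < (pos j).1 → i < j

/-- the descent set of a standard Young tableau: entries `i ∈ {1, …, n-1}` such that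
the entry `i+1` lies in a strictly higher row than `i`. -/
def Des {n d : ℕ} (τ : HookSYT n d) : Finset ℕ :=
  (Finset.Icc 1 (n-1)).filter fun i =>
    ∃ hi : i < n, ∃ hi' : i - 1 < n, (τ.pos ⟨i - 1, hi'⟩).1 < (τ.pos ⟨i, hi⟩).1

/-- the major index of a standard Young tableau -/
def majT {n d : ℕ} (τ : HookSYT n d) : ℕ := ∑ i ∈ Des τ, i

/-- the number of descents of a standard Young tableau -/
def desT {n d : ℕ} (τ : HookSYT n d) : ℕ := (Des τ).card

/-- the maximum of the descent set -/
def maxDes {n d : ℕ} (τ : HookSYT n d) : ℕ := (Des τ).sup id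

/-- the map `M_{n,d}`: the path `γ₁γ₂⋯γₙ` with `γₙ = NE`, `γ_{n-i} = NE` if
`i ∈ Des τ` and `γ_{n-i} = D` otherwise -/
def Mmap (n d : ℕ) (τ : HookSYT n d) : List Step :=
  (((List.range n).map fun j =>
    if j = n - 1 then [N, E]
    else if (n - 1 - j) ∈ Des τ then [N, E] else [D])).flatten

/-- the map `S_{n,d}`: the path `γ₁⋯γ_{n-1}` with `γ_{n-i} = NNEE` if
`i = max Des τ` and `1 ∈ Des τ`, `γ_{n-i} = NDE` if `i = max Des τ` and
`1 ∉ Des τ`, `γ_{n-i} = NE` if `i = 1` or `i ∈ Des τ ∖ {max Des τ}`, and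
`γ_{n-i} = D` otherwise. -/
def Smap (n d : ℕ) (τ : HookSYT n d) : List Step :=
  (((List.range (n-1)).map fun j =>
    if (n - 1 - j) = maxDes τ then (if 1 ∈ Des τ then [N,N,E,E] else [N,D,E])
    else if (n - 1 - j) = 1 ∨ (n - 1 - j) ∈ Des τ then [N,E] else [D])).flatten

/-- the set `V_{n,d}` of Schröder paths of the form `Dʲ NNEE u` or `Dʲ NDE u`
with `u ∈ {NE,D}* NE`, having `n-d+1` north steps and `d-1` diagonal steps. -/
def Vset (n d : ℕ) : Set (List Step) :=
  {g | (∃ j u, IsNED u ∧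
      (g = List.replicate j D ++ [N,N,E,E] ++ (u ++ [N,E]) ∨
       g = List.replicate j D ++ [N,D,E] ++ (u ++ [N,E]))) ∧
     cnt N g = n - d + 1 ∧ cnt D g = d - 1}

/-- Schröder paths in an `n × n` grid with `dd` diagonal steps, area `a`,
ending with `NE` -/
def SchT (n dd a : ℕ) : Set (List Step) :=
  {g | IsSchroeder g ∧ cnt D g = dd ∧ cnt N g = n - dd ∧ area g = a ∧ ∃ u, g = u ++ [N, E]}

/-- the 'upper' forms: `Dʲ NNEE γ' NE NE` or `γ' NE Dʲ NNEE γ''` -/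
def UpperForm (g : List Step) : Prop :=
  (∃ j u, IsNED u ∧ g = List.replicate j D ++ [N,N,E,E] ++ u ++ [N,E,N,E]) ∨
  (∃ u j v, IsNED u ∧ g = u ++ [N,E] ++ List.replicate j D ++ [N,N,E,E] ++ v)

/-- the 'lower' forms: `Dʲ NNEE γ' D NE` or `γ' NDE Dʲ NE γ''` -/
def LowerForm (g : List Step) : Prop :=
  (∃ j u, IsNED u ∧ g = List.replicate j D ++ [N,N,E,E] ++ u ++ [D,N,E]) ∨
  (∃ u j v, IsNED u ∧ g = u ++ [N,D,E] ++ List.replicate j D ++ [N,E] ++ v)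

/-- the number of distinct columns of the path -/
def Tcols (n : ℕ) (g : List Step) : ℕ :=
  ((Finset.range n).image fun i => eBefore g i).card

/-- the `q`-integer `[k]_q = 1 + q + ⋯ + q^{k-1}` as a polynomial -/
noncomputable def qInt (k : ℕ) : Polynomial ℤ := ∑ i ∈ Finset.range k, Polynomial.X ^ i

/-- the `q`-factorial `[k]!_q` -/
noncomputable def qFact (k : ℕ) : Polynomial ℤ := ∏ i ∈ Finset.range k, qInt (i+1)

private lemma eBefore_mono' (g : List Step) : ∀ i : ℕ, eBefore g i ≤ eBefore g (i+1) := by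
  induction g with
  | nil => intro i; simp [eBefore]
  | cons a t ih =>
    intro i
    cases a with
    | N =>
      match i with
      | 0 => simp [eBefore]
      | (j+1) => simpa [eBefore] using ih j
    | E => simpa [eBefore] using ih i
    | D => simpa [eBefore] using ih i

private lemma eBefore_le' (m : ℕ) : ∀ (g : List Step) (c : ℕ),
    (∀ p : List Step, p <+: g → cnt E p ≤ c + m * cnt N p) →
    ∀ i, i < cnt N g → eBefore g i ≤ c + m * i := by
  intro g
  induction g with
  | nil => intro c h i hi; simp [cnt] at hi
  | cons a t ih =>
    intro c h i hi
    cases a with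
    | N =>
      match i with
      | 0 => simp [eBefore]
      | (j+1) =>
        have h' : ∀ p, p <+: t → cnt E p ≤ (c + m) + m * cnt N p := by
          intro p hp
          have h2 := h (N :: p) (List.cons_prefix_cons.mpr ⟨rfl, hp⟩)
          have h3 : cnt N (N :: p) = cnt N p + 1 := by simp [cnt]
          have h4 : cnt E (N :: p) = cnt E p := by simp [cnt]
          rw [h3, h4, Nat.mul_add, Nat.mul_one] at h2
          linarith
        have hj : j < cnt N t := by
          have : cnt N (N :: t) = cnt N t + 1 := by simp [cnt]
          omega
        have h5 := ih (c+m) h' j hj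
        have h6 : eBefore (N :: t) (j+1) = eBefore t j := by simp [eBefore]
        rw [h6, Nat.mul_succ]
        linarith
    | E =>
      have hc : 1 ≤ c := by
        have h2 := h [E] ⟨t, rfl⟩
        simpa [cnt] using h2
      have h' : ∀ p, p <+: t → cnt E p ≤ (c - 1) + m * cnt N p := by
        intro p hp
        have h2 := h (E :: p) (List.cons_prefix_cons.mpr ⟨rfl, hp⟩)
        have h3 : cnt N (E :: p) = cnt N p := by simp [cnt]
        have h4 : cnt E (E :: p) = cnt E p + 1 := by simp [cnt]
        rw [h3, h4] at h2
        generalize m * cnt N p = x at h2 ⊢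
        omega
      have hi' : i < cnt N t := by
        have : cnt N (E :: t) = cnt N t := by simp [cnt]
        omega
      have h5 := ih (c-1) h' i hi'
      have h6 : eBefore (E :: t) i = 1 + eBefore t i := by simp [eBefore]
      rw [h6]
      generalize m * i = x at h5 ⊢
      omega
    | D =>
      have h' : ∀ p, p <+: t → cnt E p ≤ c + m * cnt N p := by
        intro p hp
        have h2 := h (D :: p) (List.cons_prefix_cons.mpr ⟨rfl, hp⟩)
        have h3 : cnt N (D :: p) = cnt N p := by simp [cnt]
        have h4 : cnt E (D :: p) = cnt E p := by simp [cnt]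
        rwa [h3, h4] at h2
      have hi' : i < cnt N t := by
        have : cnt N (D :: t) = cnt N t := by simp [cnt]
        omega
      have h6 : eBefore (D :: t) i = eBefore t i := by simp [eBefore]
      rw [h6]
      exact ih c h' i hi'

private lemma sum_sum_range' (N : ℕ) (f : ℕ → ℕ) :
    ∑ i ∈ Finset.range N, ∑ j ∈ Finset.range i, f j
      = ∑ j ∈ Finset.range N, (N - (j+1)) * f j := by
  induction N with
  | zero => simp
  | succ N ih =>
    rw [Finset.sum_range_succ, ih, Finset.sum_range_succ]
    have h1 : ∀ j ∈ Finset.range N, (N + 1 - (j+1)) * f j = (N - (j+1)) * f j + f j := by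
      intro j hj
      rw [Finset.mem_range] at hj
      have h2 : N + 1 - (j+1) = (N - (j+1)) + 1 := by omega
      rw [h2, Nat.add_mul, Nat.one_mul]
    rw [Finset.sum_congr rfl h1, Finset.sum_add_distrib]
    simp

private lemma abs_ge_cases' {x b : ℤ} (h : b ≤ |x|) : b ≤ x ∨ x ≤ -b := by
  rcases abs_cases x with ⟨h1, h2⟩ | ⟨h1, h2⟩
  · left; omega
  · right; omega

/-- If an `(n,mn)`-parking function has `dinv(γ,w) = 0`, then
`area(γ) = m·C(n,2) - n·des(w) + maj(w)`. -/
theorem stmt12 (n m : ℕ) (hm : 1 ≤ m) (g : List Step) (w : Fin n → Fin n)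
    (hpark : IsParking n m g w) (hdinv : dinv n m g w = 0) :
    (∑ i ∈ Finset.range n, aLine m g i) =
      (m : ℤ) * n.choose 2 - n * desNum n w + majStat n w := by
  obtain ⟨⟨hnoD, hN, hE, hpre⟩, hbij, hcol⟩ := hpark
  rcases Nat.eq_zero_or_pos n with hn0 | hn
  · subst hn0
    simp [desNum, majStat]
  have hm1 : (1:ℤ) ≤ (m:ℤ) := by exact_mod_cast hm
  -- value function
  set v : ℕ → ℕ := fun k => if h : k < n then ((w ⟨k, h⟩ : Fin n) : ℕ) else 0 with hv
  have hvlt : ∀ (a : ℕ) (ha : a < n) (b : ℕ) (hb : b < n),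
      (w ⟨a, ha⟩ < w ⟨b, hb⟩ ↔ v a < v b) := by
    intro a ha b hb
    simp only [hv]
    rw [dif_pos ha, dif_pos hb]
    exact Fin.lt_def
  have hvne : ∀ a b, a < n → b < n → a ≠ b → v a ≠ v b := by
    intro a b ha hb hab h
    have hw : w ⟨a, ha⟩ = w ⟨b, hb⟩ := by
      apply Fin.ext
      simpa [hv, ha, hb] using h
    have := hbij.1 hw
    simp only [Fin.mk.injEq] at this
    exact hab this
  -- dinv term extraction
  have hite : ∀ (c : Prop) (inst : Decidable c) (x : ℤ), (0:ℤ) ≤ if c then max 0 x else 0 := by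
    intro c inst x
    split
    · exact le_max_left 0 x
    · exact le_refl 0
  have hnn : ∀ i j : Fin n, (0:ℤ) ≤
      (if (i : ℕ) < (j : ℕ) then
        (if w i < w j then max 0 ((m : ℤ) - |aLine m g (i : ℕ) - aLine m g (j : ℕ)|) else 0) +
          (if w j < w i then max 0 ((m : ℤ) - |aLine m g (j : ℕ) - aLine m g (i : ℕ) + 1|) else 0)
      else 0) := by
    intro i j
    split
    · exact add_nonneg (hite _ _ _) (hite _ _ _)
    · exact le_refl 0
  have hz : ∀ i j : Fin n,
      (if (i : ℕ) < (j : ℕ) then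
        (if w i < w j then max 0 ((m : ℤ) - |aLine m g (i : ℕ) - aLine m g (j : ℕ)|) else 0) +
          (if w j < w i then max 0 ((m : ℤ) - |aLine m g (j : ℕ) - aLine m g (i : ℕ) + 1|) else 0)
      else 0) = 0 := by
    intro i j
    unfold dinv at hdinv
    have h1 := (Finset.sum_eq_zero_iff_of_nonneg
      (fun a _ => Finset.sum_nonneg (fun b _ => hnn a b))).mp hdinv i (Finset.mem_univ i)
    exact (Finset.sum_eq_zero_iff_of_nonneg (fun b _ => hnn i b)).mp h1 j (Finset.mem_univ j)
  have key1 : ∀ (a b : ℕ), a < b → ∀ (hb : b < n), v a < v b →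
      (m:ℤ) ≤ |aLine m g a - aLine m g b| := by
    intro a b hab hb hvab
    have ha : a < n := lt_trans hab hb
    have hz' := hz ⟨a, ha⟩ ⟨b, hb⟩
    rw [if_pos (show ((⟨a,ha⟩ : Fin n) : ℕ) < ((⟨b,hb⟩ : Fin n) : ℕ) from hab)] at hz'
    have hw : w ⟨a, ha⟩ < w ⟨b, hb⟩ := (hvlt a ha b hb).mpr hvab
    rw [if_pos hw] at hz'
    have hX := hite (w ⟨b,hb⟩ < w ⟨a,ha⟩) inferInstance ((m : ℤ) - |aLine m g ((⟨b,hb⟩:Fin n) : ℕ) - aLine m g ((⟨a,ha⟩:Fin n) : ℕ) + 1|)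
    have hY := le_max_left (0:ℤ) ((m : ℤ) - |aLine m g ((⟨a,ha⟩:Fin n) : ℕ) - aLine m g ((⟨b,hb⟩:Fin n) : ℕ)|)
    have hmax0 : max 0 ((m : ℤ) - |aLine m g ((⟨a,ha⟩:Fin n) : ℕ) - aLine m g ((⟨b,hb⟩:Fin n) : ℕ)|) = 0 := by
      linarith
    have := max_eq_left_iff.mp hmax0
    simpa using this
  have key2 : ∀ (a b : ℕ), a < b → ∀ (hb : b < n), v b < v a →
      (m:ℤ) ≤ |aLine m g b - aLine m g a + 1| := by
    intro a b hab hb hvab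
    have ha : a < n := lt_trans hab hb
    have hz' := hz ⟨a, ha⟩ ⟨b, hb⟩
    rw [if_pos (show ((⟨a,ha⟩ : Fin n) : ℕ) < ((⟨b,hb⟩ : Fin n) : ℕ) from hab)] at hz'
    have hw : w ⟨b, hb⟩ < w ⟨a, ha⟩ := (hvlt b hb a ha).mpr hvab
    rw [if_pos hw] at hz'
    have hX := hite (w ⟨a,ha⟩ < w ⟨b,hb⟩) inferInstance ((m : ℤ) - |aLine m g ((⟨a,ha⟩:Fin n) : ℕ) - aLine m g ((⟨b,hb⟩:Fin n) : ℕ)|)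
    have hY := le_max_left (0:ℤ) ((m : ℤ) - |aLine m g ((⟨b,hb⟩:Fin n) : ℕ) - aLine m g ((⟨a,ha⟩:Fin n) : ℕ) + 1|)
    have hmax0 : max 0 ((m : ℤ) - |aLine m g ((⟨b,hb⟩:Fin n) : ℕ) - aLine m g ((⟨a,ha⟩:Fin n) : ℕ) + 1|) = 0 := by
      linarith
    have := max_eq_left_iff.mp hmax0
    simpa using this
  have hcolv : ∀ a, a + 1 < n → eBefore g a = eBefore g (a+1) → v a < v (a+1) := by
    intro a h1 h2
    have := hcol ⟨a, Nat.lt_of_succ_lt h1⟩ ⟨a+1, h1⟩ rfl h2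
    exact (hvlt a (Nat.lt_of_succ_lt h1) (a+1) h1).mp this
  have hboundE : ∀ i, i < n → eBefore g i ≤ m * i := by
    intro i hi
    have h := eBefore_le' m g 0 (by intro p hp; simpa using hpre p hp) i (by rw [hN]; exact hi)
    simpa using h
  -- descent predicate and counting function
  set Pd : ℕ → Prop := fun j => ∃ hj : j + 1 < n, w ⟨j+1, hj⟩ < w ⟨j, Nat.lt_of_succ_lt hj⟩ with hPd
  set Dc : ℕ → ℕ := fun i => ((Finset.range i).filter Pd).card with hDc
  have hPiff : ∀ j, j + 1 < n → (Pd j ↔ v (j+1) < v j) := by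
    intro j hj
    constructor
    · rintro ⟨hj', hlt⟩
      exact (hvlt (j+1) hj' j (Nat.lt_of_succ_lt hj')).mp hlt
    · intro hlt
      exact ⟨hj, (hvlt (j+1) hj j (Nat.lt_of_succ_lt hj)).mpr hlt⟩
  have hPfalse : ∀ j, ¬ (j + 1 < n) → ¬ Pd j := by
    rintro j hj ⟨hj', _⟩
    exact hj hj'
  have hDc0 : Dc 0 = 0 := by simp [hDc]
  have hDcsucc : ∀ k, Dc (k+1) = Dc k + (if Pd k then 1 else 0) := by
    intro k
    simp only [hDc]
    rw [Finset.range_add_one, Finset.filter_insert]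
    split_ifs with h
    · rw [Finset.card_insert_of_notMem (by simp)]
    · simp
  -- main structural lemma
  have main : ∀ i, i < n → ∀ k, k ≤ i → eBefore g k = Dc k := by
    intro i
    induction i with
    | zero =>
      intro h0 k hk
      have hk0 : k = 0 := Nat.le_zero.mp hk
      subst hk0
      have h1 := hboundE 0 h0
      rw [hDc0]
      omega
    | succ i ih =>
      intro hi1 k hk
      have hin : i < n := Nat.lt_of_succ_lt hi1
      have he : ∀ k, k ≤ i → eBefore g k = Dc k := ih hin
      by_cases hki : k ≤ i
      · exact he k hki
      · have hk1 : k = i + 1 := by omega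
        subst hk1
        -- Step A : upper bound
        have hband : (eBefore g (i+1) : ℤ) ≤ (Dc i : ℤ) + 1 := by
          by_contra hbig
          push_neg at hbig
          set t : ℕ → ℤ := fun k =>
            (eBefore g (i+1) : ℤ) - (Dc k : ℤ) - (m:ℤ) * ((i:ℤ) + 1 - (k:ℤ)) with ht
          have haline : ∀ k, k ≤ i → aLine m g k - aLine m g (i+1) = t k := by
            intro k hk
            simp only [ht, aLine, he k hk]
            push_cast
            ring
          have hpairA : ∀ k, k ≤ i → v k < v (i+1) → (m:ℤ) ≤ |t k| := by
            intro k hk hvk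
            have h1 := key1 k (i+1) (by omega) hi1 hvk
            rwa [haline k hk] at h1
          have hpairB : ∀ k, k ≤ i → v (i+1) < v k → (m:ℤ) ≤ |1 - t k| := by
            intro k hk hvk
            have h2 := key2 k (i+1) (by omega) hi1 hvk
            have h3 : aLine m g (i+1) - aLine m g k + 1 = 1 - t k := by
              have := haline k hk
              linarith
            rwa [h3] at h2
          have htk_rec : ∀ k, k < i+1 → t k = t (k+1) - m + (if Pd k then 1 else 0) := by
            intro k hk
            by_cases hPk : Pd k
            · simp only [ht, hDcsucc k, if_pos hPk]
              push_cast
              ring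
            · simp only [ht, hDcsucc k, if_neg hPk]
              push_cast
              ring
          have hQ : ∀ j, j ≤ i →
              ((m:ℤ) ≤ t (i - j) ∧ (t (i-j) = (m:ℤ) → v (i-j) < v (i+1))) := by
            intro j
            induction j with
            | zero =>
              intro _
              simp only [Nat.sub_zero]
              have hti : t i = (eBefore g (i+1):ℤ) - (Dc i:ℤ) - m := by
                simp only [ht]; ring
              have htri : v i ≠ v (i+1) := hvne i (i+1) hin hi1 (by omega)
              rcases lt_or_gt_of_ne htri with hlt | hgt
              · have h1 := hpairA i le_rfl hlt
                rcases abs_ge_cases' h1 with h | h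
                · exact ⟨h, fun _ => hlt⟩
                · exfalso; linarith
              · have h1 := hpairB i le_rfl hgt
                rcases abs_ge_cases' h1 with h | h
                · exfalso; linarith
                · exact ⟨by linarith, fun hEq => by exfalso; linarith⟩
            | succ j ihj =>
              intro hji
              have hQ1 := ihj (by omega)
              have hks : i - j = (i - (j+1)) + 1 := by omega
              rw [hks] at hQ1
              set k := i - (j+1) with hkdef
              have hk_le : k ≤ i := by omega
              have hrec := htk_rec k (by omega)
              have hchi0 : (0:ℤ) ≤ (if Pd k then (1:ℤ) else 0) := by split_ifs <;> norm_num
              have hchi1 : (if Pd k then (1:ℤ) else 0) ≤ 1 := by split_ifs <;> norm_num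
              have htk0 : (0:ℤ) ≤ t k := by
                rw [hrec]; linarith [hQ1.1]
              by_cases hcase : (m:ℤ) ≤ t k
              · refine ⟨hcase, fun hEq => ?_⟩
                have hne := hvne k (i+1) (by omega) hi1 (by omega)
                rcases lt_or_gt_of_ne hne with hlt | hgt
                · exact hlt
                · exfalso
                  have h1 := hpairB k hk_le hgt
                  rcases abs_ge_cases' h1 with h | h
                  · linarith
                  · linarith
              · exfalso
                push_neg at hcase
                have hne := hvne k (i+1) (by omega) hi1 (by omega)
                rcases lt_or_gt_of_ne hne with hlt | hgt
                · have h1 := hpairA k hk_le hlt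
                  rcases abs_ge_cases' h1 with h | h
                  · linarith
                  · linarith
                · have hB := hpairB k hk_le hgt
                  rcases abs_ge_cases' hB with h | h
                  · have hmm1 : (m:ℤ) = 1 := by linarith
                    have ht0 : t k = 0 := by linarith
                    have hchiv : (if Pd k then (1:ℤ) else 0) = 0 := by
                      have := hQ1.1
                      linarith [hrec]
                    have ht1 : t (k+1) = (m:ℤ) := by
                      rw [hchiv] at hrec
                      linarith
                    have hPk : ¬ Pd k := by
                      intro hPk
                      rw [if_pos hPk] at hchiv
                      norm_num at hchiv
                    have hvk1 : v (k+1) < v (i+1) := hQ1.2 ht1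
                    have hnotdes : ¬ v (k+1) < v k := fun hc => hPk ((hPiff k (by omega)).mpr hc)
                    have hne2 : v k ≠ v (k+1) := hvne k (k+1) (by omega) (by omega) (by omega)
                    omega
                  · linarith
          have hQ0 := hQ i le_rfl
          rw [Nat.sub_self] at hQ0
          have ht0v : t 0 = (eBefore g (i+1):ℤ) - (m:ℤ) * ((i:ℤ) + 1) := by
            simp only [ht, hDc0]
            push_cast
            ring
          have hbE : (eBefore g (i+1) : ℤ) ≤ (m:ℤ) * ((i:ℤ)+1) := by
            have := hboundE (i+1) hi1
            push_cast
            exact_mod_cast by push_cast; linarith [this]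
          linarith [hQ0.1]
        -- Step B
        have hub : eBefore g (i+1) ≤ Dc i + 1 := by exact_mod_cast hband
        have hlb : Dc i ≤ eBefore g (i+1) := by
          have := eBefore_mono' g i
          rw [he i le_rfl] at this
          exact this
        by_cases hPi : Pd i
        · have hDne : eBefore g (i+1) ≠ Dc i := by
            intro hEq
            have hcv : v i < v (i+1) := hcolv i hi1 (by rw [he i le_rfl, hEq])
            have hdes : v (i+1) < v i := (hPiff i hi1).mp hPi
            omega
          have hsucc : Dc (i+1) = Dc i + 1 := by rw [hDcsucc i, if_pos hPi]
          omega
        · have hDne : eBefore g (i+1) ≠ Dc i + 1 := by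
            intro hEq
            have hvlt' : v i < v (i+1) := by
              have h1 : ¬ v (i+1) < v i := fun hc => hPi ((hPiff i hi1).mpr hc)
              have h2 : v i ≠ v (i+1) := hvne i (i+1) hin hi1 (by omega)
              omega
            have hk1 := key1 i (i+1) (by omega) hi1 hvlt'
            have hdiff : aLine m g i - aLine m g (i+1) = 1 - (m:ℤ) := by
              simp only [aLine, he i le_rfl, hEq]
              push_cast
              ring
            rw [hdiff] at hk1
            rcases abs_ge_cases' hk1 with h | h
            · linarith
            · linarith
          have hsucc : Dc (i+1) = Dc i := by rw [hDcsucc i, if_neg hPi, Nat.add_zero]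
          omega
  -- summation
  have hmain : ∀ i ∈ Finset.range n, eBefore g i = Dc i := by
    intro i hi
    rw [Finset.mem_range] at hi
    exact main (n-1) (by omega) i (by omega)
  have hLHS : (∑ i ∈ Finset.range n, aLine m g i)
      = (m:ℤ) * (n.choose 2 : ℕ) - ((∑ i ∈ Finset.range n, Dc i : ℕ) : ℤ) := by
    have h1 : ∀ i ∈ Finset.range n, aLine m g i = (m:ℤ) * i - (Dc i:ℤ) := by
      intro i hi
      simp [aLine, hmain i hi]
    rw [Finset.sum_congr rfl h1, Finset.sum_sub_distrib, ← Finset.mul_sum]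
    have h2 : (∑ i ∈ Finset.range n, (i:ℤ)) = ((n.choose 2 : ℕ) : ℤ) := by
      rw [← Nat.cast_sum, Finset.sum_range_id, Nat.choose_two_right]
    rw [h2]
    push_cast
    ring
  have hfeq : Finset.filter Pd (Finset.range n) = Finset.filter Pd (Finset.range (n-1)) := by
    ext j
    simp only [Finset.mem_filter, Finset.mem_range]
    constructor
    · rintro ⟨h1, h2⟩
      refine ⟨?_, h2⟩
      rcases h2 with ⟨hj, _⟩
      omega
    · rintro ⟨h1, h2⟩
      exact ⟨by omega, h2⟩
  have hdes : desNum n w = (Finset.filter Pd (Finset.range (n-1))).card := by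
    rfl
  have hmaj : majStat n w = ∑ j ∈ Finset.filter Pd (Finset.range (n-1)), (j+1) := by
    rfl
  have hNat : (∑ i ∈ Finset.range n, Dc i) + majStat n w = n * desNum n w := by
    have h0 : ∀ i, Dc i = ∑ j ∈ Finset.range i, (if Pd j then 1 else 0) := by
      intro i
      simp only [hDc]
      rw [Finset.card_filter]
    rw [Finset.sum_congr rfl (fun i _ => h0 i), sum_sum_range']
    have h1 : ∀ j ∈ Finset.range n, (n - (j+1)) * (if Pd j then 1 else 0)
        = (if Pd j then n - (j+1) else 0) := by
      intro j _
      split_ifs <;> simp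
    rw [Finset.sum_congr rfl h1, ← Finset.sum_filter, hfeq, hmaj, hdes,
      ← Finset.sum_add_distrib]
    have h2 : ∀ j ∈ Finset.filter Pd (Finset.range (n-1)), (n - (j+1)) + (j+1) = n := by
      intro j hj
      rw [Finset.mem_filter, Finset.mem_range] at hj
      omega
    rw [Finset.sum_congr rfl h2, Finset.sum_const, smul_eq_mul, mul_comm]
  rw [hLHS]
  have hcast : ((∑ i ∈ Finset.range n, Dc i : ℕ) : ℤ)
      = (n:ℤ) * (desNum n w : ℤ) - (majStat n w : ℤ) := by
    have := hNat
    have h3 : ((∑ i ∈ Finset.range n, Dc i : ℕ) : ℤ) + (majStat n w : ℤ)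
        = (n:ℤ) * (desNum n w : ℤ) := by exact_mod_cast congrArg (Nat.cast : ℕ → ℤ) this
    linarith
  rw [hcast]
  ring
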